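/- Suboptimality bound with action-dependent rewards (Theorem 1, finite case): Let S, A, Z be finite sets, R : S × A → ℝ bounded by R_max, γ ∈ [0,1). Suppose P(s|z) is a shared (policy-independent) conditional distribution on S given z, K(z'|z,a) is a shared Markov kernel, and ρ_θ(z,a), ρ_E(z,a) are latent state-action visitation distributions with conditional action posteriors P_θ(a|z,z') and P_E(a|z,z') and latent transition marginals ρ_θ(z,z'), ρ_E(z,z'). Define J_i = (1/(1−γ)) Σ_{z,a} ρ_i(z,a) Σ_s P(s|z) R(s,a). Then |J_E − J_θ| ≤ (2 R_max/(1−γ)) · D_TV(ρ_θ(z,z'), ρ_E(z,z')) + (2 R_max/(1−γ)) · E_{(z,z')∼ρ_θ}[ D_TV(P_θ(·|z,z'), P_E(·|z,z')) ]. -/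
import Mathlib


open Finset

/-- Suboptimality bound with action-dependent rewards (Theorem 1, finite case).
With shared conditional `P(s|z)`, shared kernel `K(z'|z,a)`, latent state-action visitation
distributions `ρ_θ`, `ρ_E`, latent transition marginals `ρᵢᵗ(z,z') = Σ_a ρᵢ(z,a) K(z'|z,a)`,
action posteriors `Pᵢ(a|z,z') = ρᵢ(z,a) K(z'|z,a) / ρᵢᵗ(z,z')`, and
`Jᵢ = (1/(1−γ)) Σ_{z,a} ρᵢ(z,a) Σ_s P(s|z) R(s,a)`:
`|J_E − J_θ| ≤ (2R_max/(1−γ))·D_TV(ρ_θᵗ, ρ_Eᵗ)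
             + (2R_max/(1−γ))·E_{(z,z')∼ρ_θᵗ}[D_TV(P_θ(·|z,z'), P_E(·|z,z'))]`. -/
theorem subopt_bound_action_reward {S A Z : Type*} [Fintype S] [Fintype A] [Fintype Z]
    (R : S → A → ℝ) (Rmax : ℝ) (hR : ∀ s a, |R s a| ≤ Rmax)
    (γ : ℝ) (hγ0 : 0 ≤ γ) (hγ1 : γ < 1)
    (P : Z → S → ℝ) (hP0 : ∀ z s, 0 ≤ P z s) (hP1 : ∀ z, ∑ s, P z s = 1)
    (K : Z → A → Z → ℝ) (hK0 : ∀ z a z', 0 ≤ K z a z') (hK1 : ∀ z a, ∑ z', K z a z' = 1)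
    (ρθ ρE : Z × A → ℝ)
    (hρθ0 : ∀ x, 0 ≤ ρθ x) (hρθ1 : ∑ x, ρθ x = 1)
    (hρE0 : ∀ x, 0 ≤ ρE x) (hρE1 : ∑ x, ρE x = 1)
    (ρθt ρEt : Z × Z → ℝ)
    (hρθt : ∀ z z', ρθt (z, z') = ∑ a, ρθ (z, a) * K z a z')
    (hρEt : ∀ z z', ρEt (z, z') = ∑ a, ρE (z, a) * K z a z')
    (Pθ PE : Z → Z → A → ℝ)
    (hPθ : ∀ z z' a, Pθ z z' a = ρθ (z, a) * K z a z' / ρθt (z, z'))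
    (hPE : ∀ z z' a, PE z z' a = ρE (z, a) * K z a z' / ρEt (z, z'))
    (Jθ JE : ℝ)
    (hJθ : Jθ = (1 / (1 - γ)) * ∑ x : Z × A, ρθ x * ∑ s, P x.1 s * R s x.2)
    (hJE : JE = (1 / (1 - γ)) * ∑ x : Z × A, ρE x * ∑ s, P x.1 s * R s x.2) :
    |JE - Jθ|
      ≤ (2 * Rmax / (1 - γ)) * ((1 / 2) * ∑ y : Z × Z, |ρθt y - ρEt y|)
        + (2 * Rmax / (1 - γ))
            * ∑ y : Z × Z, ρθt y * ((1 / 2) * ∑ a, |Pθ y.1 y.2 a - PE y.1 y.2 a|) := by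
  have h1γ : (0:ℝ) < 1 - γ := by linarith
  have hZA : Nonempty (Z × A) := by
    by_contra h
    rw [not_nonempty_iff] at h
    rw [Finset.univ_eq_empty, Finset.sum_empty] at hρθ1
    exact zero_ne_one hρθ1
  obtain ⟨⟨z0, a0⟩⟩ := hZA
  have hS : Nonempty S := by
    by_contra h
    rw [not_nonempty_iff] at h
    have := hP1 z0
    rw [Finset.univ_eq_empty, Finset.sum_empty] at this
    exact zero_ne_one this
  obtain ⟨s0⟩ := hS
  have hRmax : 0 ≤ Rmax := le_trans (abs_nonneg _) (hR s0 a0)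
  have hρθt0 : ∀ z z', 0 ≤ ρθt (z, z') := fun z z' => by
    rw [hρθt]
    exact Finset.sum_nonneg fun a _ => mul_nonneg (hρθ0 _) (hK0 _ _ _)
  have hρEt0 : ∀ z z', 0 ≤ ρEt (z, z') := fun z z' => by
    rw [hρEt]
    exact Finset.sum_nonneg fun a _ => mul_nonneg (hρE0 _) (hK0 _ _ _)
  -- reward bound
  have hrb : ∀ x : Z × A, |∑ s, P x.1 s * R s x.2| ≤ Rmax := by
    intro x
    calc |∑ s, P x.1 s * R s x.2| ≤ ∑ s, |P x.1 s * R s x.2| :=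
          Finset.abs_sum_le_sum_abs _ _
      _ ≤ ∑ s, P x.1 s * Rmax := by
          refine Finset.sum_le_sum fun s _ => ?_
          rw [abs_mul, abs_of_nonneg (hP0 _ _)]
          exact mul_le_mul_of_nonneg_left (hR s x.2) (hP0 _ _)
      _ = Rmax := by rw [← Finset.sum_mul, hP1, one_mul]
  -- Step 1
  have step1 : |JE - Jθ| ≤ (Rmax / (1 - γ)) * ∑ x : Z × A, |ρθ x - ρE x| := by
    have hdiff : JE - Jθ
        = (1 / (1 - γ)) * ∑ x : Z × A, (ρE x - ρθ x) * ∑ s, P x.1 s * R s x.2 := by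
      rw [hJE, hJθ, ← mul_sub, ← Finset.sum_sub_distrib]
      congr 1
      exact Finset.sum_congr rfl fun x _ => by ring
    rw [hdiff, abs_mul, abs_of_nonneg (by positivity : (0:ℝ) ≤ 1 / (1 - γ))]
    calc (1 / (1 - γ)) * |∑ x : Z × A, (ρE x - ρθ x) * ∑ s, P x.1 s * R s x.2|
        ≤ (1 / (1 - γ)) * ∑ x : Z × A, |ρθ x - ρE x| * Rmax := by
          refine mul_le_mul_of_nonneg_left ?_ (by positivity)
          refine le_trans (Finset.abs_sum_le_sum_abs _ _) (Finset.sum_le_sum fun x _ => ?_)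
          rw [abs_mul, abs_sub_comm]
          exact mul_le_mul_of_nonneg_left (hrb x) (abs_nonneg _)
      _ = (Rmax / (1 - γ)) * ∑ x : Z × A, |ρθ x - ρE x| := by
          rw [← Finset.sum_mul]; ring
  -- key identities
  have keyθ : ∀ z z' a, ρθ (z, a) * K z a z' = Pθ z z' a * ρθt (z, z') := by
    intro z z' a
    by_cases h : ρθt (z, z') = 0
    · have h0 : ∑ a, ρθ (z, a) * K z a z' = 0 := (hρθt z z').symm.trans h
      have := (Finset.sum_eq_zero_iff_of_nonneg
        (fun a _ => mul_nonneg (hρθ0 (z, a)) (hK0 z a z'))).mp h0 a (Finset.mem_univ a)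
      rw [this, h, mul_zero]
    · rw [hPθ]; field_simp
  have keyE : ∀ z z' a, ρE (z, a) * K z a z' = PE z z' a * ρEt (z, z') := by
    intro z z' a
    by_cases h : ρEt (z, z') = 0
    · have h0 : ∑ a, ρE (z, a) * K z a z' = 0 := (hρEt z z').symm.trans h
      have := (Finset.sum_eq_zero_iff_of_nonneg
        (fun a _ => mul_nonneg (hρE0 (z, a)) (hK0 z a z'))).mp h0 a (Finset.mem_univ a)
      rw [this, h, mul_zero]
    · rw [hPE]; field_simp
  have hPE0 : ∀ z z' a, 0 ≤ PE z z' a := fun z z' a => by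
    rw [hPE]
    exact div_nonneg (mul_nonneg (hρE0 _) (hK0 _ _ _)) (hρEt0 z z')
  have hPEsum : ∀ z z', ∑ a, PE z z' a ≤ 1 := by
    intro z z'
    by_cases h : ρEt (z, z') = 0
    · simp [hPE, h]
    · have : ∑ a, PE z z' a = ρEt (z, z') / ρEt (z, z') := by
        simp only [hPE]
        rw [← Finset.sum_div, ← hρEt]
      rw [this, div_self h]
  -- Step 2
  have step2 : ∑ x : Z × A, |ρθ x - ρE x|
      ≤ (∑ y : Z × Z, |ρθt y - ρEt y|)
        + ∑ y : Z × Z, ρθt y * ∑ a, |Pθ y.1 y.2 a - PE y.1 y.2 a| := by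
    have expand : ∀ z a, |ρθ (z, a) - ρE (z, a)|
        = ∑ z', |Pθ z z' a * ρθt (z, z') - PE z z' a * ρEt (z, z')| := by
      intro z a
      calc |ρθ (z, a) - ρE (z, a)|
          = |ρθ (z, a) - ρE (z, a)| * ∑ z', K z a z' := by rw [hK1, mul_one]
        _ = ∑ z', |ρθ (z, a) - ρE (z, a)| * K z a z' := Finset.mul_sum _ _ _
        _ = ∑ z', |Pθ z z' a * ρθt (z, z') - PE z z' a * ρEt (z, z')| := by
            refine Finset.sum_congr rfl fun z' _ => ?_
            rw [← abs_of_nonneg (hK0 z a z'), ← abs_mul, sub_mul, keyθ, keyE]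
    calc ∑ x : Z × A, |ρθ x - ρE x|
        = ∑ z, ∑ z', ∑ a, |Pθ z z' a * ρθt (z, z') - PE z z' a * ρEt (z, z')| := by
          rw [Fintype.sum_prod_type]
          refine Finset.sum_congr rfl fun z _ => ?_
          rw [Finset.sum_comm]
          exact Finset.sum_congr rfl fun a _ => expand z a
      _ ≤ ∑ z, ∑ z', ∑ a,
            (|Pθ z z' a - PE z z' a| * ρθt (z, z') + PE z z' a * |ρθt (z, z') - ρEt (z, z')|) := by
          refine Finset.sum_le_sum fun z _ => Finset.sum_le_sum fun z' _ =>
            Finset.sum_le_sum fun a _ => ?_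
          have : Pθ z z' a * ρθt (z, z') - PE z z' a * ρEt (z, z')
              = (Pθ z z' a - PE z z' a) * ρθt (z, z')
                + PE z z' a * (ρθt (z, z') - ρEt (z, z')) := by ring
          rw [this]
          refine le_trans (abs_add_le _ _) (add_le_add ?_ ?_)
          · rw [abs_mul, abs_of_nonneg (hρθt0 z z')]
          · rw [abs_mul, abs_of_nonneg (hPE0 z z' a)]
      _ ≤ (∑ y : Z × Z, |ρθt y - ρEt y|)
            + ∑ y : Z × Z, ρθt y * ∑ a, |Pθ y.1 y.2 a - PE y.1 y.2 a| := by
          rw [Fintype.sum_prod_type, Fintype.sum_prod_type, ← Finset.sum_add_distrib]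
          refine Finset.sum_le_sum fun z _ => ?_
          rw [← Finset.sum_add_distrib]
          refine Finset.sum_le_sum fun z' _ => ?_
          rw [Finset.sum_add_distrib, ← Finset.sum_mul, ← Finset.sum_mul]
          rw [add_comm]
          refine add_le_add ?_ (le_of_eq (mul_comm _ _))
          · calc (∑ a, PE z z' a) * |ρθt (z, z') - ρEt (z, z')|
                ≤ 1 * |ρθt (z, z') - ρEt (z, z')| :=
                  mul_le_mul_of_nonneg_right (hPEsum z z') (abs_nonneg _)
              _ = |ρθt (z, z') - ρEt (z, z')| := one_mul _
  -- combine
  have hRHS : (2 * Rmax / (1 - γ)) * ((1 / 2) * ∑ y : Z × Z, |ρθt y - ρEt y|)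
        + (2 * Rmax / (1 - γ))
            * ∑ y : Z × Z, ρθt y * ((1 / 2) * ∑ a, |Pθ y.1 y.2 a - PE y.1 y.2 a|)
      = (Rmax / (1 - γ)) * ((∑ y : Z × Z, |ρθt y - ρEt y|)
          + ∑ y : Z × Z, ρθt y * ∑ a, |Pθ y.1 y.2 a - PE y.1 y.2 a|) := by
    have : ∑ y : Z × Z, ρθt y * ((1 / 2) * ∑ a, |Pθ y.1 y.2 a - PE y.1 y.2 a|)
        = (1 / 2) * ∑ y : Z × Z, ρθt y * ∑ a, |Pθ y.1 y.2 a - PE y.1 y.2 a| := by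
      rw [Finset.mul_sum]
      exact Finset.sum_congr rfl fun y _ => by ring
    rw [this]; ring
  rw [hRHS]
  calc |JE - Jθ| ≤ (Rmax / (1 - γ)) * ∑ x : Z × A, |ρθ x - ρE x| := step1
    _ ≤ _ := mul_le_mul_of_nonneg_left step2 (by positivity)
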